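/- The poset L̃(M) obtained from a matroid M by taking the disjoint union of the independence complex I(M) (ordered by inclusion) and the lattice of flats L(M) (a starred copy, ordered by inclusion), with the additional cover relations I ⋖ cl_M(I)_* for every independent set I, is a geometric lattice. -/

import Mathlib

open scoped Classical

variable {α : Type*}

/-- The underlying set of the poset `L̃(M)`: the disjoint union of the
independence complex of `M` and (a starred copy of) the collection of flats of
`M`. -/
def TildeL (M : Matroid α) : Type _ :=
  {I : Set α // M.Indep I} ⊕ {F : Set α // M.IsFlat F}

/-- The order on `L̃(M)`: independent sets and flats are each ordered by
inclusion, `I ≤ F_*` iff `I ⊆ F`, and no flat is below an independent set.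
(This order relation is generated by the inclusion orders together with the
cover relations `I ⋖ cl_M(I)_*`.) -/
def tleq {M : Matroid α} : TildeL M → TildeL M → Prop
  | .inl I, .inl J => I.1 ⊆ J.1
  | .inl I, .inr F => I.1 ⊆ F.1
  | .inr _, .inl _ => False
  | .inr F, .inr G => F.1 ⊆ G.1

instance {M : Matroid α} : PartialOrder (TildeL M) where
  le := tleq
  le_refl x := by cases x <;> exact Set.Subset.rfl
  le_trans x y z h1 h2 := by
    rcases x with I | F <;> rcases y with J | G <;> rcases z with K | H <;>
      first
        | exact Set.Subset.trans h1 h2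
        | exact h1.elim
        | exact h2.elim
  le_antisymm x y h1 h2 := by
    rcases x with I | F <;> rcases y with J | G
    · exact congrArg Sum.inl (Subtype.ext (Set.Subset.antisymm h1 h2))
    · exact h2.elim
    · exact h1.elim
    · exact congrArg Sum.inr (Subtype.ext (Set.Subset.antisymm h1 h2))

instance {M : Matroid α} : OrderBot (TildeL M) where
  bot := Sum.inl ⟨∅, M.empty_indep⟩
  bot_le x := by cases x <;> exact Set.empty_subset _

set_option linter.unusedSectionVars false

section TildeAux
open Set

namespace TildeAux
variable {M : Matroid α} {I J X Y F G : Set α}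

noncomputable def mrk (M : Matroid α) (X : Set α) : ℕ := (M.exists_isBasis' X).choose.ncard

lemma basis'_ncard (h : M.IsBasis' I X) : I.ncard = mrk M X := by
  have h2 := (M.exists_isBasis' X).choose_spec
  have := h.encard_eq_encard h2
  rw [Set.ncard_def, this, ← Set.ncard_def]; rfl

lemma basis_ncard (h : M.IsBasis I X) : I.ncard = mrk M X := basis'_ncard h.isBasis'

lemma mrk_indep (h : M.Indep I) : mrk M I = I.ncard := (basis_ncard h.isBasis_self).symm

lemma flat_closure (M : Matroid α) (X : Set α) : M.IsFlat (M.closure X) := by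
  rw [Matroid.closure_def]
  have hne : Nonempty ↑{F | M.IsFlat F ∧ X ∩ M.E ⊆ F} := ⟨⟨M.E, M.ground_isFlat, inter_subset_right⟩⟩
  rw [sInter_eq_iInter]
  exact Matroid.IsFlat.iInter fun F => F.2.1

lemma flat_inter (hF : M.IsFlat F) (hG : M.IsFlat G) : M.IsFlat (F ∩ G) := by
  rw [Set.inter_eq_iInter]
  exact Matroid.IsFlat.iInter (by rintro (_|_) <;> simpa)

variable [Fintype α]

lemma ncard_le_mrk (h : M.Indep I) (hIX : I ⊆ X) : I.ncard ≤ mrk M X := by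
  obtain ⟨J, hJ, hIJ⟩ := h.subset_isBasis'_of_subset hIX
  rw [← basis'_ncard hJ]
  exact Set.ncard_le_ncard hIJ (Set.toFinite _)

lemma mrk_mono (h : X ⊆ Y) : mrk M X ≤ mrk M Y := by
  obtain ⟨I, hI⟩ := M.exists_isBasis' X
  rw [← basis'_ncard hI]
  exact ncard_le_mrk hI.indep (hI.subset.trans h)

lemma mrk_closure (M : Matroid α) (X : Set α) : mrk M (M.closure X) = mrk M X := by
  obtain ⟨I, hI⟩ := M.exists_isBasis' X
  rw [← basis'_ncard hI, ← basis_ncard hI.isBasis_closure_right]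

lemma mrk_lt_of_flat_ssubset (hF : M.IsFlat F) (hG : M.IsFlat G) (hss : F ⊂ G) :
    mrk M F < mrk M G := by
  obtain ⟨I, hI⟩ := M.exists_isBasis F hF.subset_ground
  obtain ⟨e, heG, heF⟩ := exists_of_ssubset hss
  have hclI : M.closure I = F := by rw [hI.closure_eq_closure, hF.closure]
  have heI : e ∉ I := fun h => heF (hI.subset h)
  have hins : M.Indep (insert e I) := by
    rw [hI.indep.insert_indep_iff_of_notMem heI]
    exact ⟨hG.subset_ground heG, fun h => heF (hclI ▸ h)⟩
  have hle := ncard_le_mrk hins (insert_subset heG (hI.subset.trans hss.subset))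
  rwa [Set.ncard_insert_of_notMem heI (Set.toFinite _), basis_ncard hI, Nat.add_one_le_iff] at hle

lemma mrk_lt_ncard_of_dep (hX : X ⊆ M.E) (hdep : ¬ M.Indep X) : mrk M X < X.ncard := by
  obtain ⟨I, hI⟩ := M.exists_isBasis X hX
  rw [← basis_ncard hI]
  refine Set.ncard_lt_ncard ?_ (Set.toFinite _)
  exact hI.subset.ssubset_of_ne (fun h => hdep (h ▸ hI.indep))

lemma mrk_submod (M : Matroid α) (X Y : Set α) (hX : X ⊆ M.E) (hY : Y ⊆ M.E) :
    mrk M (X ∪ Y) + mrk M (X ∩ Y) ≤ mrk M X + mrk M Y := by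
  obtain ⟨I, hI⟩ := M.exists_isBasis (X ∩ Y) ((inter_subset_left).trans hX)
  obtain ⟨J, hJ, hIJ⟩ := hI.indep.subset_isBasis_of_subset
    (hI.subset.trans ((inter_subset_left).trans subset_union_left)) (union_subset hX hY)
  have h1 : (J ∩ X).ncard + (J ∩ Y).ncard
      = ((J ∩ X) ∪ (J ∩ Y)).ncard + ((J ∩ X) ∩ (J ∩ Y)).ncard :=
    (Set.ncard_union_add_ncard_inter _ _).symm
  have h2 : (J ∩ X) ∪ (J ∩ Y) = J := by
    rw [← Set.inter_union_distrib_left, Set.inter_eq_left]; exact hJ.subset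
  have h3 : (J ∩ X) ∩ (J ∩ Y) = J ∩ (X ∩ Y) := by
    rw [Set.inter_inter_inter_comm, Set.inter_self]
  have h4 : mrk M (X ∩ Y) ≤ (J ∩ (X ∩ Y)).ncard := by
    rw [← basis_ncard hI]
    exact Set.ncard_le_ncard (subset_inter hIJ hI.subset) (Set.toFinite _)
  have h5 : (J ∩ X).ncard ≤ mrk M X := ncard_le_mrk (hJ.indep.subset inter_subset_left)
    inter_subset_right
  have h6 : (J ∩ Y).ncard ≤ mrk M Y := ncard_le_mrk (hJ.indep.subset inter_subset_left)
    inter_subset_right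
  have h7 : mrk M (X ∪ Y) = J.ncard := (basis_ncard hJ).symm
  rw [h2, h3] at h1
  omega

/-! ### Order facts about `TildeL M` -/

lemma bot_def : (⊥ : TildeL M) = Sum.inl ⟨∅, M.empty_indep⟩ := rfl

/-- The meet operation on `TildeL M`. -/
def tmeet (M : Matroid α) : TildeL M → TildeL M → TildeL M
  | .inl I, .inl J => .inl ⟨I.1 ∩ J.1, I.2.subset inter_subset_left⟩
  | .inl I, .inr F => .inl ⟨I.1 ∩ F.1, I.2.subset inter_subset_left⟩
  | .inr F, .inl J => .inl ⟨F.1 ∩ J.1, J.2.subset inter_subset_right⟩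
  | .inr F, .inr G => .inr ⟨F.1 ∩ G.1, flat_inter F.2 G.2⟩

/-- The join operation on `TildeL M`. -/
noncomputable def tjoin (M : Matroid α) : TildeL M → TildeL M → TildeL M
  | .inl I, .inl J =>
      if h : M.Indep (I.1 ∪ J.1) then .inl ⟨I.1 ∪ J.1, h⟩
      else .inr ⟨M.closure (I.1 ∪ J.1), flat_closure M _⟩
  | .inl I, .inr F => .inr ⟨M.closure (I.1 ∪ F.1), flat_closure M _⟩
  | .inr F, .inl J => .inr ⟨M.closure (F.1 ∪ J.1), flat_closure M _⟩
  | .inr F, .inr G => .inr ⟨M.closure (F.1 ∪ G.1), flat_closure M _⟩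

lemma tjoin_pos {I J : {I : Set α // M.Indep I}} (h : M.Indep (I.1 ∪ J.1)) :
    tjoin M (.inl I) (.inl J) = .inl ⟨I.1 ∪ J.1, h⟩ := by
  simp only [tjoin]; exact dif_pos h

lemma tjoin_neg {I J : {I : Set α // M.Indep I}} (h : ¬ M.Indep (I.1 ∪ J.1)) :
    tjoin M (.inl I) (.inl J) = .inr ⟨M.closure (I.1 ∪ J.1), flat_closure M _⟩ := by
  simp only [tjoin]; exact dif_neg h

lemma isGLB_tmeet (x y : TildeL M) : IsGLB {x, y} (tmeet M x y) := by
  constructor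
  · rintro a ha
    simp only [Set.mem_insert_iff, Set.mem_singleton_iff] at ha
    rcases x with I | F <;> rcases y with J | G <;> rcases ha with rfl | rfl <;>
      first
        | exact inter_subset_left
        | exact inter_subset_right
  · rintro w hw
    have hx : w ≤ x := hw (Set.mem_insert _ _)
    have hy : w ≤ y := hw (Set.mem_insert_of_mem _ rfl)
    rcases w with K | H <;> rcases x with I | F <;> rcases y with J | G <;>
      first
        | exact subset_inter hx hy
        | exact hx.elim
        | exact hy.elim

lemma isLUB_tjoin (x y : TildeL M) : IsLUB {x, y} (tjoin M x y) := by
  have hcl : ∀ (Z : Set α) (H : {F : Set α // M.IsFlat F}), Z ⊆ H.1 →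
      M.closure Z ⊆ H.1 := by
    intro Z H hZH
    rw [← H.2.closure]
    exact M.closure_subset_closure hZH
  constructor
  · rintro a ha
    simp only [Set.mem_insert_iff, Set.mem_singleton_iff] at ha
    rcases x with I | F <;> rcases y with J | G <;> rcases ha with rfl | rfl <;>
        simp only [tjoin]
    · by_cases h : M.Indep (I.1 ∪ J.1)
      · show @LE.le (TildeL M) _ (Sum.inl I) (tjoin M (.inl I) (.inl J)); rw [tjoin_pos h]; exact subset_union_left
      · show @LE.le (TildeL M) _ (Sum.inl I) (tjoin M (.inl I) (.inl J)); rw [tjoin_neg h]; exact subset_union_left.trans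
          (M.subset_closure _ (union_subset I.2.subset_ground J.2.subset_ground))
    · by_cases h : M.Indep (I.1 ∪ J.1)
      · show @LE.le (TildeL M) _ (Sum.inl J) (tjoin M (.inl I) (.inl J)); rw [tjoin_pos h]; exact subset_union_right
      · show @LE.le (TildeL M) _ (Sum.inl J) (tjoin M (.inl I) (.inl J)); rw [tjoin_neg h]; exact subset_union_right.trans
          (M.subset_closure _ (union_subset I.2.subset_ground J.2.subset_ground))
    · exact subset_union_left.trans
        (M.subset_closure _ (union_subset I.2.subset_ground G.2.subset_ground))
    · exact subset_union_right.trans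
        (M.subset_closure _ (union_subset I.2.subset_ground G.2.subset_ground))
    · exact subset_union_left.trans
        (M.subset_closure _ (union_subset F.2.subset_ground J.2.subset_ground))
    · exact subset_union_right.trans
        (M.subset_closure _ (union_subset F.2.subset_ground J.2.subset_ground))
    · exact subset_union_left.trans
        (M.subset_closure _ (union_subset F.2.subset_ground G.2.subset_ground))
    · exact subset_union_right.trans
        (M.subset_closure _ (union_subset F.2.subset_ground G.2.subset_ground))
  · rintro w hw
    have hx : x ≤ w := hw (Set.mem_insert _ _)
    have hy : y ≤ w := hw (Set.mem_insert_of_mem _ rfl)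
    rcases x with I | F <;> rcases y with J | G <;> rcases w with K | H <;>
      simp only [tjoin] <;>
      first
        | exact hx.elim
        | exact hy.elim
        | skip
    · show tjoin M (.inl I) (.inl J) ≤ (Sum.inl K : TildeL M)
      rw [tjoin_pos (K.2.subset (union_subset hx hy))]
      exact union_subset hx hy
    · by_cases h : M.Indep (I.1 ∪ J.1)
      · show tjoin M (.inl I) (.inl J) ≤ (Sum.inr H : TildeL M); rw [tjoin_pos h]; exact union_subset hx hy
      · show tjoin M (.inl I) (.inl J) ≤ (Sum.inr H : TildeL M); rw [tjoin_neg h]; exact hcl _ _ (union_subset hx hy)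
    · exact hcl _ _ (union_subset hx hy)
    · exact hcl _ _ (union_subset hx hy)
    · exact hcl _ _ (union_subset hx hy)

/-! ### Atoms -/

lemma isAtom_singleton {e : α} (h : M.Indep {e}) :
    IsAtom (α := TildeL M) (Sum.inl ⟨{e}, h⟩) := by
  constructor
  · intro hbot
    rw [bot_def] at hbot
    have : ({e} : Set α) = ∅ := congrArg (fun z => Sum.elim Subtype.val Subtype.val z) hbot
    exact Set.singleton_ne_empty e this
  · intro b hb
    rcases b with K | G
    · have hsub : K.1 ⊆ {e} := hb.le
      rcases Set.subset_singleton_iff_eq.mp hsub with h0 | h1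
      · rw [bot_def]
        exact congrArg Sum.inl (Subtype.ext h0)
      · exact absurd (congrArg Sum.inl (Subtype.ext h1)) hb.ne
    · exact hb.le.elim

lemma isAtom_cl_empty :
    IsAtom (α := TildeL M) (Sum.inr ⟨M.closure ∅, flat_closure M ∅⟩) := by
  constructor
  · intro hbot
    rw [bot_def] at hbot
    cases hbot
  · intro b hb
    rcases b with K | G
    · have hsub : K.1 ⊆ M.closure ∅ := hb.le
      have hK : K.1 = ∅ := by
        rw [Set.eq_empty_iff_forall_notMem]
        intro e he
        have h1 : e ∉ M.closure (K.1 \ {e}) := K.2.notMem_closure_diff_of_mem he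
        exact h1 (M.closure_subset_closure (Set.empty_subset _) (hsub he))
      rw [bot_def]
      exact congrArg Sum.inl (Subtype.ext hK)
    · exfalso
      have hsub : G.1 ⊆ M.closure ∅ := hb.le
      have hsub' : M.closure ∅ ⊆ G.1 := by
        rw [← G.2.closure]
        exact M.closure_subset_closure (Set.empty_subset _)
      exact hb.ne (congrArg Sum.inr (Subtype.ext (hsub.antisymm hsub')))

lemma isLUB_atoms (x : TildeL M) :
    IsLUB {a : TildeL M | IsAtom a ∧ a ≤ x} x := by
  constructor
  · rintro a ⟨-, ha⟩
    exact ha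
  · rintro w hw
    rcases x with I | F
    · have key : ∀ e, e ∈ I.1 → ∀ (h : M.Indep {e}),
          ({e} : Set α) ⊆ (Sum.elim Subtype.val Subtype.val w) := by
        intro e he h
        have h2 := hw ⟨isAtom_singleton h, Set.singleton_subset_iff.mpr he⟩
        rcases w with K | H
        · exact h2
        · exact h2
      rcases w with K | H
      · intro e he
        exact key e he (I.2.subset (Set.singleton_subset_iff.mpr he)) rfl
      · intro e he
        exact key e he (I.2.subset (Set.singleton_subset_iff.mpr he)) rfl
    · have h0 := hw ⟨isAtom_cl_empty, show M.closure ∅ ⊆ F.1 by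
        rw [← F.2.closure]; exact M.closure_subset_closure (Set.empty_subset _)⟩
      rcases w with K | H
      · exact h0.elim
      · show F.1 ⊆ H.1
        intro e he
        have heE : e ∈ M.E := F.2.subset_ground he
        by_cases hcl : e ∈ M.closure ∅
        · exact h0 hcl
        · have hind : M.Indep {e} := by
            have := M.empty_indep.insert_indep_iff_of_notMem (Set.notMem_empty e)
            rw [Set.singleton_def]
            exact this.mpr ⟨heE, hcl⟩
          have h3 := hw ⟨isAtom_singleton hind, Set.singleton_subset_iff.mpr he⟩
          exact h3 rfl

/-! ### Heights -/

/-- The rank function on `TildeL M`. -/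
noncomputable def trank (M : Matroid α) : TildeL M → ℕ
  | .inl I => I.1.ncard
  | .inr F => mrk M F.1 + 1

lemma trank_strictMono : StrictMono (trank M) := by
  intro x y hxy
  rcases x with I | F <;> rcases y with J | G
  · exact Set.ncard_lt_ncard (HasSubset.Subset.ssubset_of_ne hxy.le
      (fun h => hxy.ne (congrArg Sum.inl (Subtype.ext h)))) (Set.toFinite _)
  · exact Nat.lt_succ_of_le (ncard_le_mrk I.2 hxy.le)
  · exact hxy.le.elim
  · exact Nat.succ_lt_succ (mrk_lt_of_flat_ssubset F.2 G.2
      (HasSubset.Subset.ssubset_of_ne hxy.le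
        (fun h => hxy.ne (congrArg Sum.inr (Subtype.ext h)))))

lemma lt_mk {x y : TildeL M} (hle : tleq x y) (hne : x ≠ y) : x < y :=
  lt_of_le_of_ne hle hne

lemma height_le_trank (x : TildeL M) : Order.height x ≤ (trank M x : ℕ∞) := by
  have := Order.height_le_height_apply_of_strictMono (trank M) trank_strictMono x
  rwa [Order.height_nat] at this

lemma height_lt_top (x : TildeL M) : Order.height x < ⊤ :=
  lt_of_le_of_lt (height_le_trank x) (WithTop.coe_lt_top _)

lemma height_succ_le {x y : TildeL M} (h : x < y) :
    Order.height x + 1 ≤ Order.height y :=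
  Order.add_one_le_of_lt (Order.height_strictMono h (height_lt_top x))

lemma le_height_inl : ∀ (n : ℕ) (I : {I : Set α // M.Indep I}), I.1.ncard = n →
    (n : ℕ∞) ≤ Order.height (α := TildeL M) (Sum.inl I) := by
  intro n
  induction n with
  | zero => intro I _; simp
  | succ n ih =>
    intro I hn
    have hne : I.1.Nonempty := by
      rw [Set.nonempty_iff_ne_empty]
      intro h0
      rw [h0, Set.ncard_empty] at hn
      omega
    obtain ⟨e, he⟩ := hne
    set J : {I : Set α // M.Indep I} := ⟨I.1 \ {e}, I.2.subset diff_subset⟩ with hJ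
    have hJn : J.1.ncard = n := by
      rw [hJ, Set.ncard_diff_singleton_of_mem he, hn]
      omega
    have hne2 : (Sum.inl J : TildeL M) ≠ Sum.inl I := by
      intro hEq
      have h5 : J.1 = I.1 := congrArg (fun z => Sum.elim Subtype.val Subtype.val z) hEq
      rw [hJ] at h5
      have h6 : e ∈ I.1 \ {e} := by rw [show I.1 \ {e} = (⟨I.1 \ {e}, I.2.subset diff_subset⟩ :
        {I : Set α // M.Indep I}).1 from rfl, h5]; exact he
      exact h6.2 rfl
    have hlt := lt_mk (M := M) (x := Sum.inl J) (y := Sum.inl I) diff_subset hne2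
    have := (add_le_add_left (ih J hJn) 1).trans (height_succ_le hlt)
    rwa [show ((n : ℕ∞) + 1) = ((n + 1 : ℕ) : ℕ∞) by push_cast; ring] at this

lemma height_inl (I : {I : Set α // M.Indep I}) :
    Order.height (α := TildeL M) (Sum.inl I) = (I.1.ncard : ℕ∞) :=
  le_antisymm (height_le_trank _) (le_height_inl _ I rfl)

lemma height_inr (F : {F : Set α // M.IsFlat F}) :
    Order.height (α := TildeL M) (Sum.inr F) = (mrk M F.1 + 1 : ℕ) := by
  refine le_antisymm (height_le_trank _) ?_
  obtain ⟨I, hI⟩ := M.exists_isBasis F.1 F.2.subset_ground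
  have hlt := lt_mk (M := M) (x := Sum.inl ⟨I, hI.indep⟩) (y := Sum.inr F) hI.subset
    (fun h => by cases h)
  have h1 := (add_le_add_left (le_height_inl I.ncard ⟨I, hI.indep⟩ rfl) 1).trans
    (height_succ_le hlt)
  rw [basis_ncard hI] at h1
  rwa [show ((mrk M F.1 : ℕ∞) + 1) = ((mrk M F.1 + 1 : ℕ) : ℕ∞) by push_cast; ring] at h1

end TildeAux
end TildeAux

open TildeAux in
/-- `L̃(M)` is a geometric lattice: it is a lattice (all pairwise joins and
meets exist), it is atomic (every element is the least upper bound of the atoms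
below it), and its rank function (the order-theoretic height) is upper
semimodular. -/
theorem tildeL_geometric [Fintype α] (M : Matroid α) :
    (∀ x y : TildeL M, (∃ z, IsLUB {x, y} z) ∧ (∃ z, IsGLB {x, y} z)) ∧
    (∀ x : TildeL M, IsLUB {a | IsAtom a ∧ a ≤ x} x) ∧
    (∀ x y s j : TildeL M, IsGLB {x, y} s → IsLUB {x, y} j →
      Order.height j + Order.height s ≤ Order.height x + Order.height y) := by
  refine ⟨fun x y => ⟨⟨_, isLUB_tjoin x y⟩, ⟨_, isGLB_tmeet x y⟩⟩, isLUB_atoms, ?_⟩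
  intro x y s j hs hj
  have hs' : s = tmeet M x y := hs.unique (isGLB_tmeet x y)
  have hj' : j = tjoin M x y := hj.unique (isLUB_tjoin x y)
  subst hs' hj'
  clear hs hj
  rcases x with I | F <;> rcases y with J | G <;>
    simp only [tmeet, tjoin]
  · by_cases h : M.Indep (I.1 ∪ J.1)
    · show Order.height (tjoin M (.inl I) (.inl J)) + _ ≤ _
      rw [tjoin_pos h]
      simp only [height_inl]
      have h2 := Set.ncard_union_add_ncard_inter I.1 J.1
      norm_cast
      omega
    · show Order.height (tjoin M (.inl I) (.inl J)) + _ ≤ _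
      rw [tjoin_neg h]
      rw [height_inr, height_inl, height_inl, height_inl]
      have h1 : mrk M (M.closure (I.1 ∪ J.1)) = mrk M (I.1 ∪ J.1) := mrk_closure M _
      have h2 : mrk M (I.1 ∪ J.1) < (I.1 ∪ J.1).ncard :=
        mrk_lt_ncard_of_dep (Set.union_subset I.2.subset_ground J.2.subset_ground) h
      have h3 := Set.ncard_union_add_ncard_inter I.1 J.1
      dsimp only
      norm_cast
      omega
  · rw [height_inr, height_inl, height_inl, height_inr]
    have h1 : mrk M (M.closure (I.1 ∪ G.1)) = mrk M (I.1 ∪ G.1) := mrk_closure M _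
    have h2 := mrk_submod M I.1 G.1 I.2.subset_ground G.2.subset_ground
    have h3 : mrk M I.1 = I.1.ncard := mrk_indep I.2
    have h4 : mrk M (I.1 ∩ G.1) = (I.1 ∩ G.1).ncard := mrk_indep (I.2.subset Set.inter_subset_left)
    dsimp only
    norm_cast
    omega
  · rw [height_inr, height_inl, height_inr, height_inl]
    have h1 : mrk M (M.closure (F.1 ∪ J.1)) = mrk M (F.1 ∪ J.1) := mrk_closure M _
    have h2 := mrk_submod M F.1 J.1 F.2.subset_ground J.2.subset_ground
    have h3 : mrk M J.1 = J.1.ncard := mrk_indep J.2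
    have h4 : mrk M (F.1 ∩ J.1) = (F.1 ∩ J.1).ncard := mrk_indep (J.2.subset Set.inter_subset_right)
    dsimp only
    norm_cast
    omega
  · rw [height_inr, height_inr, height_inr, height_inr]
    have h1 : mrk M (M.closure (F.1 ∪ G.1)) = mrk M (F.1 ∪ G.1) := mrk_closure M _
    have h2 := mrk_submod M F.1 G.1 F.2.subset_ground G.2.subset_ground
    dsimp only
    norm_cast
    omega
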